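/- Let λ > 0 be a real number with λ ≠ 1 and let h : ℝ → ℝ be continuous with h(t + 1) = h(t) for all t. Set k := (λ − 1)⁻¹ · ∫₀¹ λˣ · h(x) dx and define f : ℝ → ℝ by f(t) := λ^(−t) · ( k + ∫₀ᵗ λˣ · h(x) dx ). Then f is differentiable, f satisfies f′(t) + (log λ) · f(t) = h(t) for all t ∈ ℝ, and f is periodic with period 1, i.e. f(t + 1) = f(t) for all t ∈ ℝ. -/

import Mathlib

/-- The explicit function `f(t) = λ^(-t) (k + ∫₀ᵗ λˣ h(x) dx)`, with
`k = (λ-1)⁻¹ ∫₀¹ λˣ h(x) dx`, is a differentiable 1-periodic solution of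
`f' + (log λ) f = h` for 1-periodic continuous `h`. -/
theorem stmt10 (l : ℝ) (hl : 0 < l) (hl1 : l ≠ 1)
    (h : ℝ → ℝ) (hc : Continuous h) (hper : ∀ t, h (t + 1) = h t)
    (k : ℝ) (hk : k = (l - 1)⁻¹ * ∫ x in (0 : ℝ)..1, l ^ x * h x)
    (f : ℝ → ℝ)
    (hf : ∀ t, f t = l ^ (-t) * (k + ∫ x in (0 : ℝ)..t, l ^ x * h x)) :
    Differentiable ℝ f ∧
      (∀ t, deriv f t + Real.log l * f t = h t) ∧
      (∀ t, f (t + 1) = f t) := by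
  set G : ℝ → ℝ := fun t => ∫ x in (0 : ℝ)..t, l ^ x * h x with hG
  have hcl : Continuous fun x : ℝ => l ^ x :=
    continuous_iff_continuousAt.mpr fun x =>
      (Real.hasStrictDerivAt_const_rpow hl x).hasDerivAt.differentiableAt.continuousAt
  have hcont : Continuous fun x : ℝ => l ^ x * h x := hcl.mul hc
  have hGd : ∀ t, HasDerivAt G (l ^ t * h t) t := fun t =>
    (hcont.integral_hasStrictDerivAt 0 t).hasDerivAt
  have hpow : ∀ t : ℝ, HasDerivAt (fun t : ℝ => l ^ (-t)) (-(l ^ (-t) * Real.log l)) t := by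
    intro t
    have := ((Real.hasStrictDerivAt_const_rpow hl (-t)).hasDerivAt.comp t
      ((hasDerivAt_id t).neg))
    simpa [mul_comm, Function.comp_def] using this
  have hne : ∀ t : ℝ, l ^ t ≠ 0 := fun t => (Real.rpow_pos_of_pos hl t).ne'
  have hfd : ∀ t, HasDerivAt f (h t - Real.log l * f t) t := by
    intro t
    have H := (hpow t).mul ((hasDerivAt_const t k).add (hGd t))
    have heq : (fun t => l ^ (-t) * (k + G t)) = f := by
      funext s; rw [hf s]
    rw [show ((fun t : ℝ => l ^ (-t)) * ((fun _ : ℝ => k) + G)) = f from heq] at H; have H : HasDerivAt f (-(l ^ (-t) * Real.log l) * (k + G t) + l ^ (-t) * (0 + l ^ t * h t)) t := H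
    convert H using 1
    rw [hf t]
    have h1 : l ^ (-t) * l ^ t = 1 := by
      rw [← Real.rpow_add hl]; simp
    linear_combination (-(h t)) * h1
  have hdiff : Differentiable ℝ f := fun t => (hfd t).differentiableAt
  have hode : ∀ t, deriv f t + Real.log l * f t = h t := by
    intro t
    rw [(hfd t).deriv]; ring
  refine ⟨hdiff, hode, ?_⟩
  -- periodicity
  set q : ℝ → ℝ := fun t => f (t + 1) - f t with hq
  have hq0 : q 0 = 0 := by
    have hl1' : l - 1 ≠ 0 := sub_ne_zero.mpr hl1
    have hI : G 1 = (l - 1) * k := by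
      rw [hk]; field_simp; rfl
    simp only [hq, hf, zero_add, hG]
    rw [show (∫ x in (0:ℝ)..(0:ℝ), l ^ x * h x) = 0 from intervalIntegral.integral_same]
    have : (G 1 : ℝ) = (l-1)*k := hI
    simp only [hG] at this
    rw [this, Real.rpow_neg_one, Real.rpow_neg hl.le, Real.rpow_zero]
    field_simp
    ring
  have hqd : ∀ t, HasDerivAt q (-(Real.log l) * q t) t := by
    intro t
    have h1 : HasDerivAt (fun t => f (t + 1)) (h (t+1) - Real.log l * f (t+1)) t := by
      have := (hfd (t+1)).comp t ((hasDerivAt_id t).add_const 1)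
      simpa [Function.comp_def] using this
    have : HasDerivAt q (h (t + 1) - Real.log l * f (t + 1) - (h t - Real.log l * f t)) t := h1.sub (hfd t)
    convert this using 1
    rw [hper t, hq]
    ring
  set e : ℝ → ℝ := fun t => l ^ t * q t with he
  have hed : ∀ t, HasDerivAt e 0 t := by
    intro t
    have hp : HasDerivAt (fun t : ℝ => l ^ t) (l ^ t * Real.log l) t :=
      (Real.hasStrictDerivAt_const_rpow hl t).hasDerivAt
    have : HasDerivAt e (l ^ t * Real.log l * q t + l ^ t * (-(Real.log l) * q t)) t := hp.mul (hqd t)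
    convert this using 1
    ring
  have hconst : ∀ t, e t = e 0 := by
    intro t
    exact is_const_of_deriv_eq_zero (fun s => (hed s).differentiableAt)
      (fun s => (hed s).deriv) t 0
  intro t
  have : e t = 0 := by rw [hconst t, he]; simp [hq0]
  have : q t = 0 := by
    have := this
    rw [he] at this
    exact (mul_eq_zero.mp this).resolve_left (hne t)
  change f (t + 1) - f t = 0 at this
  linarith
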